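/- Let k ∈ ℝ be such that p(λᵐk) ≠ 0 for all integers m ≥ 0 and such that lim_{n→∞} (1/n)·∑_{ℓ=0}^{n−1} log|p(λˡk)| = 0 (a condition holding for Lebesgue-almost every k). Define χ̃₁(k) := −limsup_{n→∞} (1/n)·log‖B(k)·B(λk)·…·B(λⁿ⁻¹k)‖_F and χ̃₂(k) := limsup_{n→∞} (1/n)·log‖B(λⁿ⁻¹k)⁻¹·…·B(λk)⁻¹·B(k)⁻¹‖_F, where ‖·‖_F is the Frobenius norm. Then χ̃₁(k) + χ̃₂(k) = 0. Moreover, if the sequence (1/n)·log‖B(k)·B(λk)·…·B(λⁿ⁻¹k)‖_F converges as n → ∞, then both χ̃₁(k) and χ̃₂(k) exist as limits (not merely as limsups). -/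

import Mathlib

open Filter Matrix

/-- The Perron–Frobenius eigenvalue `λ = (1+√13)/2` of `M = [[1,1],[3,0]]`. -/
noncomputable def lam : ℝ := (1 + Real.sqrt 13) / 2

/-- `p(k) = e^{2πikλ} + e^{2πik(λ+1)} + e^{2πik(λ+2)}`. -/
noncomputable def pfun (k : ℝ) : ℂ :=
  Complex.exp (((2 * Real.pi * k * lam : ℝ) : ℂ) * Complex.I) +
  Complex.exp (((2 * Real.pi * k * (lam + 1) : ℝ) : ℂ) * Complex.I) +
  Complex.exp (((2 * Real.pi * k * (lam + 2) : ℝ) : ℂ) * Complex.I)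

/-- The Fourier matrix `B(k) = [[1,1],[p(k),0]]`. -/
noncomputable def Bmat (k : ℝ) : Matrix (Fin 2) (Fin 2) ℂ :=
  !![1, 1; pfun k, 0]

/-- The outward matrix product `B⁽ⁿ⁾(k) = B(k)·B(λk)·…·B(λⁿ⁻¹k)`. -/
noncomputable def Bout (k : ℝ) : ℕ → Matrix (Fin 2) (Fin 2) ℂ
  | 0 => 1
  | n + 1 => Bout k n * Bmat (lam ^ n * k)

/-- The Frobenius norm of a complex 2×2 matrix. -/
noncomputable def frobNorm (M : Matrix (Fin 2) (Fin 2) ℂ) : ℝ :=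
  Real.sqrt (∑ i : Fin 2, ∑ j : Fin 2, ‖M i j‖ ^ 2)

attribute [local instance] Matrix.frobeniusSeminormedAddCommGroup
  Matrix.frobeniusNormedAddCommGroup Matrix.frobeniusNormedSpace Matrix.frobeniusIsBoundedSMul

lemma frobNorm_eq (M : Matrix (Fin 2) (Fin 2) ℂ) : frobNorm M = ‖M‖ := by
  rw [Matrix.frobenius_norm_def, ← Real.sqrt_eq_rpow]
  unfold frobNorm
  congr 1
  refine Finset.sum_congr rfl fun i _ => Finset.sum_congr rfl fun j _ => ?_
  rw [← Real.rpow_natCast]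
  norm_num

lemma pfun_abs_le (x : ℝ) : ‖pfun x‖ ≤ 3 := by
  unfold pfun
  refine le_trans (le_trans (norm_add_le _ _)
    (add_le_add_left (norm_add_le _ _) _)) ?_
  simp only [Complex.norm_exp_ofReal_mul_I]
  norm_num

lemma det_Bmat (x : ℝ) : (Bmat x).det = -pfun x := by
  simp [Bmat, Matrix.det_fin_two_of]

lemma frobNorm_Bmat_le (x : ℝ) : frobNorm (Bmat x) ≤ Real.sqrt 11 := by
  unfold frobNorm Bmat
  apply Real.sqrt_le_sqrt
  have := pfun_abs_le x
  have h0 := norm_nonneg (pfun x)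
  simp [Fin.sum_univ_two]
  nlinarith

lemma frobNorm_adjugate (A : Matrix (Fin 2) (Fin 2) ℂ) :
    frobNorm (Matrix.adjugate A) = frobNorm A := by
  rw [Matrix.adjugate_fin_two]
  unfold frobNorm
  simp [Fin.sum_univ_two]
  ring

lemma frobNorm_inv (A : Matrix (Fin 2) (Fin 2) ℂ) (h : A.det ≠ 0) :
    frobNorm A⁻¹ = frobNorm A / ‖A.det‖ := by
  rw [Matrix.inv_def, Ring.inverse_eq_inv', frobNorm_eq, norm_smul, ← frobNorm_eq,
    frobNorm_adjugate, norm_inv]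
  rw [div_eq_inv_mul]

lemma det_abs_le_sq (A : Matrix (Fin 2) (Fin 2) ℂ) :
    ‖A.det‖ ≤ frobNorm A ^ 2 := by
  have hnn : (0:ℝ) ≤ ∑ i : Fin 2, ∑ j : Fin 2, ‖A i j‖ ^ 2 :=
    Finset.sum_nonneg fun i _ => Finset.sum_nonneg fun j _ => sq_nonneg _
  rw [frobNorm, Real.sq_sqrt hnn, Matrix.det_fin_two]
  refine le_trans (norm_sub_le _ _) ?_
  rw [norm_mul, norm_mul]
  have h00 := norm_nonneg (A 0 0)
  have h01 := norm_nonneg (A 0 1)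
  have h10 := norm_nonneg (A 1 0)
  have h11 := norm_nonneg (A 1 1)
  simp [Fin.sum_univ_two]
  nlinarith [sq_nonneg (‖A 0 0‖ - ‖A 1 1‖),
    sq_nonneg (‖A 0 1‖ - ‖A 1 0‖)]

lemma frobNorm_pos (A : Matrix (Fin 2) (Fin 2) ℂ) (h : A.det ≠ 0) : 0 < frobNorm A := by
  rw [frobNorm_eq]
  rw [norm_pos_iff]
  rintro rfl
  exact h (by simp)

lemma frobNorm_mul_le (A B : Matrix (Fin 2) (Fin 2) ℂ) :
    frobNorm (A * B) ≤ frobNorm A * frobNorm B := by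
  rw [frobNorm_eq, frobNorm_eq, frobNorm_eq]
  exact Matrix.frobenius_norm_mul A B

lemma frobNorm_one : frobNorm (1 : Matrix (Fin 2) (Fin 2) ℂ) = Real.sqrt 2 := by
  unfold frobNorm
  norm_num [Fin.sum_univ_two, Matrix.one_apply]

lemma det_Bout (k : ℝ) (n : ℕ) :
    (Bout k n).det = ∏ ℓ ∈ Finset.range n, (-pfun (lam ^ ℓ * k)) := by
  induction n with
  | zero => simp [Bout]
  | succ n ih => rw [Bout, Matrix.det_mul, ih, det_Bmat, Finset.prod_range_succ]

lemma abs_det_Bout (k : ℝ) (n : ℕ) :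
    ‖(Bout k n).det‖ = ∏ ℓ ∈ Finset.range n, ‖pfun (lam ^ ℓ * k)‖ := by
  rw [det_Bout, norm_prod]
  exact Finset.prod_congr rfl fun i _ => by rw [norm_neg]

lemma det_Bout_ne (k : ℝ) (hk : ∀ m : ℕ, pfun (lam ^ m * k) ≠ 0) (n : ℕ) :
    (Bout k n).det ≠ 0 := by
  rw [det_Bout]
  exact Finset.prod_ne_zero_iff.2 fun i _ => neg_ne_zero.2 (hk i)

lemma log_abs_det_Bout (k : ℝ) (hk : ∀ m : ℕ, pfun (lam ^ m * k) ≠ 0) (n : ℕ) :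
    Real.log (‖(Bout k n).det‖)
      = ∑ ℓ ∈ Finset.range n, Real.log (‖pfun (lam ^ ℓ * k)‖) := by
  rw [abs_det_Bout]
  exact Real.log_prod fun i _ => fun h =>
    hk i (norm_eq_zero.mp h)

lemma frobNorm_Bout_le (k : ℝ) (n : ℕ) :
    frobNorm (Bout k n) ≤ Real.sqrt 2 * Real.sqrt 11 ^ n := by
  induction n with
  | zero => simp [Bout, frobNorm_one]
  | succ n ih =>
    rw [Bout, pow_succ]
    calc frobNorm (Bout k n * Bmat (lam ^ n * k))
        ≤ frobNorm (Bout k n) * frobNorm (Bmat (lam ^ n * k)) := frobNorm_mul_le _ _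
      _ ≤ (Real.sqrt 2 * Real.sqrt 11 ^ n) * Real.sqrt 11 := by
          apply mul_le_mul ih (frobNorm_Bmat_le _) (by
            rw [frobNorm_eq]; exact norm_nonneg _) (by positivity)
      _ = Real.sqrt 2 * (Real.sqrt 11 ^ n * Real.sqrt 11) := by ring

lemma limsup_add_tendsto_zero (f v : ℕ → ℝ)
    (hbdd : IsBoundedUnder (· ≤ ·) atTop f) (hbdd' : IsBoundedUnder (· ≥ ·) atTop f)
    (hv : Tendsto v atTop (nhds 0)) :
    limsup (fun n => f n + v n) atTop = limsup f atTop := by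
  have hvle : IsBoundedUnder (· ≤ ·) atTop v := hv.isBoundedUnder_le
  have hvge : IsBoundedUnder (· ≥ ·) atTop v := hv.isBoundedUnder_ge
  apply le_antisymm
  · have := limsup_add_le (f := atTop) (u := f) (v := v) hbdd' hbdd
      hvge.isCoboundedUnder_le hvle
    rwa [hv.limsup_eq, add_zero] at this
  · have := le_limsup_add (f := atTop) (u := f) (v := v) hbdd
      hbdd'.isCoboundedUnder_le hvle hvge
    rwa [hv.liminf_eq, add_zero] at this


/-- `χ̃₁(k) = −limsup_n (1/n)·log‖B⁽ⁿ⁾(k)‖_F`. -/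
noncomputable def chi1 (k : ℝ) : ℝ :=
  -(limsup (fun n : ℕ => (n : ℝ)⁻¹ * Real.log (frobNorm (Bout k n))) atTop)

/-- `χ̃₂(k) = limsup_n (1/n)·log‖B(λⁿ⁻¹k)⁻¹·…·B(k)⁻¹‖_F = limsup_n (1/n)·log‖(B⁽ⁿ⁾(k))⁻¹‖_F`. -/
noncomputable def chi2 (k : ℝ) : ℝ :=
  limsup (fun n : ℕ => (n : ℝ)⁻¹ * Real.log (frobNorm ((Bout k n)⁻¹))) atTop

/-- Let `k ∈ ℝ` satisfy `p(λᵐk) ≠ 0` for all `m ≥ 0` and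
`lim_n (1/n)·∑_{ℓ<n} log|p(λˡk)| = 0`. Then `χ̃₁(k) + χ̃₂(k) = 0`. Moreover, if
`(1/n)·log‖B⁽ⁿ⁾(k)‖_F` converges as `n → ∞`, then both `χ̃₁(k)` and `χ̃₂(k)` exist
as limits (not merely as limsups). -/
theorem stmt8 (k : ℝ) (hk : ∀ m : ℕ, pfun (lam ^ m * k) ≠ 0)
    (hsum : Tendsto (fun n : ℕ =>
        (n : ℝ)⁻¹ * ∑ ℓ ∈ Finset.range n, Real.log (‖pfun (lam ^ ℓ * k)‖))
      atTop (nhds 0)) :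
    chi1 k + chi2 k = 0 ∧
    ((∃ L : ℝ, Tendsto (fun n : ℕ => (n : ℝ)⁻¹ * Real.log (frobNorm (Bout k n)))
        atTop (nhds L)) →
      Tendsto (fun n : ℕ => -((n : ℝ)⁻¹ * Real.log (frobNorm (Bout k n))))
        atTop (nhds (chi1 k)) ∧
      Tendsto (fun n : ℕ => (n : ℝ)⁻¹ * Real.log (frobNorm ((Bout k n)⁻¹)))
        atTop (nhds (chi2 k))) := by
  set F : ℕ → ℝ := fun n => (n : ℝ)⁻¹ * Real.log (frobNorm (Bout k n)) with hF
  set S : ℕ → ℝ := fun n =>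
    (n : ℝ)⁻¹ * ∑ ℓ ∈ Finset.range n, Real.log (‖pfun (lam ^ ℓ * k)‖) with hS
  have hdet : ∀ n, (Bout k n).det ≠ 0 := det_Bout_ne k hk
  have habs_pos : ∀ n, 0 < ‖(Bout k n).det‖ :=
    fun n => norm_pos_iff.mpr (hdet n)
  have hfrob_pos : ∀ n, 0 < frobNorm (Bout k n) := fun n => frobNorm_pos _ (hdet n)
  -- the inverse sequence equals F + (-S)
  have hGeq : (fun n : ℕ => (n : ℝ)⁻¹ * Real.log (frobNorm ((Bout k n)⁻¹)))
      = fun n => F n + (-(S n)) := by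
    funext n
    rw [frobNorm_inv _ (hdet n), Real.log_div (ne_of_gt (hfrob_pos n))
      (ne_of_gt (habs_pos n)), log_abs_det_Bout k hk n]
    simp only [hF, hS]
    ring
  -- upper bound for F
  have h1le2 : (1:ℝ) ≤ Real.sqrt 2 := by
    rw [show (1:ℝ) = Real.sqrt 1 by simp]
    exact Real.sqrt_le_sqrt (by norm_num)
  have h1le11 : (1:ℝ) ≤ Real.sqrt 11 := by
    rw [show (1:ℝ) = Real.sqrt 1 by simp]
    exact Real.sqrt_le_sqrt (by norm_num)
  have hl2 : 0 ≤ Real.log (Real.sqrt 2) := Real.log_nonneg h1le2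
  have hl11 : 0 ≤ Real.log (Real.sqrt 11) := Real.log_nonneg h1le11
  have hFub : ∀ n : ℕ, F n ≤ Real.log (Real.sqrt 2) + Real.log (Real.sqrt 11) := by
    intro n
    rcases Nat.eq_zero_or_pos n with rfl | hn
    · simp [hF]
      positivity
    · have hnR : (0:ℝ) < (n:ℝ) := by exact_mod_cast hn
      have hlog : Real.log (frobNorm (Bout k n))
          ≤ Real.log (Real.sqrt 2) + n * Real.log (Real.sqrt 11) := by
        calc Real.log (frobNorm (Bout k n))
            ≤ Real.log (Real.sqrt 2 * Real.sqrt 11 ^ n) :=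
              Real.log_le_log (hfrob_pos n) (frobNorm_Bout_le k n)
          _ = Real.log (Real.sqrt 2) + n * Real.log (Real.sqrt 11) := by
              rw [Real.log_mul (by positivity) (by positivity), Real.log_pow]
      have hinv1 : (n:ℝ)⁻¹ ≤ 1 := by
        rw [inv_le_one_iff₀]; right; exact_mod_cast hn
      have h2 : F n ≤ (n:ℝ)⁻¹ * (Real.log (Real.sqrt 2) + n * Real.log (Real.sqrt 11)) :=
        mul_le_mul_of_nonneg_left hlog (by positivity)
      calc F n ≤ (n:ℝ)⁻¹ * Real.log (Real.sqrt 2) + (n:ℝ)⁻¹ * ((n:ℝ) * Real.log (Real.sqrt 11)) := by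
              rw [← mul_add]; exact h2
        _ = (n:ℝ)⁻¹ * Real.log (Real.sqrt 2) + Real.log (Real.sqrt 11) := by
              field_simp
        _ ≤ Real.log (Real.sqrt 2) + Real.log (Real.sqrt 11) := by
              have := mul_le_of_le_one_left hl2 hinv1
              linarith
  -- lower bound: S n ≤ 2 * F n
  have hSF : ∀ n : ℕ, S n ≤ 2 * F n := by
    intro n
    have hlog : Real.log (‖(Bout k n).det‖)
        ≤ 2 * Real.log (frobNorm (Bout k n)) := by
      calc Real.log (‖(Bout k n).det‖)
          ≤ Real.log (frobNorm (Bout k n) ^ 2) :=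
            Real.log_le_log (habs_pos n) (det_abs_le_sq _)
        _ = 2 * Real.log (frobNorm (Bout k n)) := by
            rw [Real.log_pow]; norm_num
    have : (n:ℝ)⁻¹ * Real.log (‖(Bout k n).det‖)
        ≤ (n:ℝ)⁻¹ * (2 * Real.log (frobNorm (Bout k n))) :=
      mul_le_mul_of_nonneg_left hlog (by positivity)
    rw [log_abs_det_Bout k hk n] at this
    simp only [hF, hS]
    calc (n:ℝ)⁻¹ * ∑ ℓ ∈ Finset.range n, Real.log (‖pfun (lam ^ ℓ * k)‖)
        ≤ (n:ℝ)⁻¹ * (2 * Real.log (frobNorm (Bout k n))) := this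
      _ = 2 * ((n:ℝ)⁻¹ * Real.log (frobNorm (Bout k n))) := by ring
  have hub : IsBoundedUnder (· ≤ ·) atTop F :=
    isBoundedUnder_of_eventually_le (Eventually.of_forall hFub)
  have hlb : IsBoundedUnder (· ≥ ·) atTop F := by
    have hev : ∀ᶠ n : ℕ in atTop, (-1 : ℝ) ≤ S n :=
      hsum.eventually (eventually_ge_nhds (by norm_num : (-1:ℝ) < 0))
    refine isBoundedUnder_of_eventually_ge (a := -(1/2 : ℝ)) ?_
    filter_upwards [hev] with n hn
    have := hSF n
    linarith
  have hnegS : Tendsto (fun n => -(S n)) atTop (nhds 0) := by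
    simpa using hsum.neg
  have key : limsup (fun n : ℕ => (n : ℝ)⁻¹ * Real.log (frobNorm ((Bout k n)⁻¹))) atTop
      = limsup F atTop := by
    rw [hGeq]
    exact limsup_add_tendsto_zero F _ hub hlb hnegS
  constructor
  · show -(limsup F atTop) + limsup _ atTop = 0
    rw [key]; ring
  · rintro ⟨L, hL⟩
    have h1 : limsup F atTop = L := hL.limsup_eq
    constructor
    · have : chi1 k = -L := by unfold chi1; rw [← hF, h1]
      rw [this]
      exact hL.neg
    · have hGL : Tendsto (fun n : ℕ => (n : ℝ)⁻¹ * Real.log (frobNorm ((Bout k n)⁻¹)))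
          atTop (nhds L) := by
        rw [hGeq]
        simpa using hL.add hnegS
      have : chi2 k = L := by unfold chi2; exact hGL.limsup_eq
      rw [this]
      exact hGL
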